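/- For a digraph D and an integer l, there exists a coloring of D with l colors that is both acyclic and complete if and only if dc(D) ≤ l ≤ dac(D). -/

import Mathlib

/-- The subset `S` of vertices induces an acyclic subdigraph of the digraph with
arc relation `A` (i.e. there is no directed cycle all of whose vertices lie in `S`). -/
def AcyclicSet {V : Type*} (A : V → V → Prop) (S : Set V) : Prop :=
  ∀ v : V, ¬ Relation.TransGen (fun x y => x ∈ S ∧ y ∈ S ∧ A x y) v v

/-- `c` is an acyclic vertex coloring of the digraph `A` with `k` colors:
`c` is surjective and every chromatic class induces an acyclic subdigraph. -/
def IsAcyclicColoring {V : Type*} (A : V → V → Prop) {k : ℕ} (c : V → Fin k) : Prop :=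
  Function.Surjective c ∧ ∀ i : Fin k, AcyclicSet A {v | c v = i}

/-- `c` is a complete vertex coloring of the digraph `A` with `k` colors:
`c` is surjective and for every ordered pair of distinct colors `(i, j)` there is
an arc `(u, v)` with `c u = i` and `c v = j`. -/
def IsCompleteColoring {V : Type*} (A : V → V → Prop) {k : ℕ} (c : V → Fin k) : Prop :=
  Function.Surjective c ∧
    ∀ i j : Fin k, i ≠ j → ∃ u v : V, A u v ∧ c u = i ∧ c v = j

/-- The diachromatic number: the largest `k` admitting a complete acyclic `k`-coloring. -/
noncomputable def dac {V : Type*} (A : V → V → Prop) : ℕ :=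
  sSup {k | ∃ c : V → Fin k, IsAcyclicColoring A c ∧ IsCompleteColoring A c}

/-- The dichromatic number: the smallest `k` admitting an acyclic `k`-coloring. -/
noncomputable def dc {V : Type*} (A : V → V → Prop) : ℕ :=
  sInf {k | ∃ c : V → Fin k, IsAcyclicColoring A c}

/-- The pseudoachromatic number: the largest `k` admitting a complete `k`-coloring. -/
noncomputable def psi {V : Type*} (A : V → V → Prop) : ℕ :=
  sSup {k | ∃ c : V → Fin k, IsCompleteColoring A c}

/-- `A` is a tournament: no loops, and for distinct vertices exactly one of the
two possible arcs is present. -/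
def IsTournament {V : Type*} (A : V → V → Prop) : Prop :=
  (∀ v : V, ¬ A v v) ∧ ∀ u v : V, u ≠ v → (A u v ↔ ¬ A v u)

open Relation

section Helpers
variable {V : Type*} {A : V → V → Prop}

lemma acyclicSet_mono {S S' : Set V} (hsub : S' ⊆ S) (hS : AcyclicSet A S) :
    AcyclicSet A S' := by
  intro v hv
  exact hS v (TransGen.mono (fun x y ⟨hx, hy, hA⟩ => ⟨hsub hx, hsub hy, hA⟩) v v hv)

lemma acyclicSet_subsingleton {S : Set V} (hirr : ∀ v, ¬ A v v)
    (hS : ∀ a ∈ S, ∀ b ∈ S, a = b) : AcyclicSet A S := by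
  intro v hv
  rcases (Relation.TransGen.head'_iff.1 hv) with ⟨c, ⟨hvS, hcS, hA⟩, -⟩
  exact hirr v (by rwa [hS c hcS v hvS] at hA)

lemma acyclicSet_empty (hirr : ∀ v, ¬ A v v) : AcyclicSet A (∅ : Set V) :=
  acyclicSet_subsingleton hirr (by simp)

/-- If there are no arcs from `P` to `Q` and both are acyclic, the union is acyclic. -/
lemma acyclicSet_union {P Q : Set V} (hP : AcyclicSet A P) (hQ : AcyclicSet A Q)
    (hno : ∀ u ∈ P, ∀ v ∈ Q, ¬ A u v) : AcyclicSet A (P ∪ Q) := by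
  intro v hv
  have claim1 : ∀ a b : V, TransGen (fun x y => x ∈ P ∪ Q ∧ y ∈ P ∪ Q ∧ A x y) a b →
      a ∈ P → b ∈ P ∧ TransGen (fun x y => x ∈ P ∧ y ∈ P ∧ A x y) a b := by
    intro a b h
    induction h with
    | @single b hstep =>
      intro ha
      obtain ⟨-, hb, hA⟩ := hstep
      rcases hb with hb | hb
      · exact ⟨hb, TransGen.single ⟨ha, hb, hA⟩⟩
      · exact absurd hA (hno _ ha _ hb)
    | @tail m b hac hstep ih =>
      intro ha
      obtain ⟨hm, hmb⟩ := ih ha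
      obtain ⟨-, hb, hA⟩ := hstep
      rcases hb with hb | hb
      · exact ⟨hb, hmb.tail ⟨hm, hb, hA⟩⟩
      · exact absurd hA (hno _ hm _ hb)
  have claim2 : ∀ a b : V, TransGen (fun x y => x ∈ P ∪ Q ∧ y ∈ P ∪ Q ∧ A x y) a b →
      a ∉ P → b ∈ Q → TransGen (fun x y => x ∈ Q ∧ y ∈ Q ∧ A x y) a b := by
    intro a b h
    induction h with
    | @single b hstep =>
      intro ha hb
      obtain ⟨haPQ, -, hA⟩ := hstep
      rcases haPQ with h' | h'
      · exact absurd h' ha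
      · exact TransGen.single ⟨h', hb, hA⟩
    | @tail m b ham hstep ih =>
      intro ha hb
      obtain ⟨hmPQ, -, hA⟩ := hstep
      rcases hmPQ with h' | h'
      · exact absurd hA (hno _ h' _ hb)
      · exact (ih ha h').tail ⟨h', hb, hA⟩
  by_cases hvP : v ∈ P
  · exact hP v (claim1 v v hv hvP).2
  · rcases (Relation.TransGen.head'_iff.1 hv) with ⟨c, ⟨hvm, -, -⟩, -⟩
    rcases hvm with hvm | hvm
    · exact absurd hvm hvP
    · exact hQ v (claim2 v v hv hvP hvm)

/-- From a cycle in `insert y T` with `T` acyclic and `y ∉ T`, an arc from `y` into `T`. -/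
lemma exists_arc_out {T : Set V} {y : V} (hirr : ∀ v, ¬ A v v) (hyT : y ∉ T)
    (hT : AcyclicSet A T)
    (hcyc : ¬ AcyclicSet A (insert y T)) : ∃ u ∈ T, A y u := by
  by_contra hno
  push_neg at hno
  apply hcyc
  intro v hv
  have claim : ∀ a b : V, TransGen (fun x z => x ∈ insert y T ∧ z ∈ insert y T ∧ A x z) a b →
      b ≠ y → TransGen (fun x z => x ∈ T ∧ z ∈ T ∧ A x z) a b := by
    intro a b h
    induction h with
    | @single b hstep =>
      intro hb
      obtain ⟨ha, hbm, hA⟩ := hstep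
      have hbT : b ∈ T := by
        rcases hbm with h' | h'
        · exact absurd h' hb
        · exact h'
      rcases ha with rfl | haT
      · exact absurd hA (hno b hbT)
      · exact TransGen.single ⟨haT, hbT, hA⟩
    | @tail m b ham hstep ih =>
      intro hb
      obtain ⟨hmm, hbm, hA⟩ := hstep
      have hbT : b ∈ T := by
        rcases hbm with h' | h'
        · exact absurd h' hb
        · exact h'
      rcases hmm with rfl | hmT
      · exact absurd hA (hno b hbT)
      · exact (ih (fun h => hyT (h ▸ hmT))).tail ⟨hmT, hbT, hA⟩
  by_cases hvy : v = y
  · rcases (Relation.TransGen.head'_iff.1 hv) with ⟨c, ⟨-, hcm, hA⟩, -⟩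
    rcases hcm with h' | hcT
    · exact hirr v (by rw [hvy, ← h'] at hA ⊢; exact hA)
    · exact hno c hcT (hvy ▸ hA)
  · exact hT v (claim v v hv hvy)

/-- From a cycle in `insert y T` with `T` acyclic and `y ∉ T`, an arc from `T` into `y`. -/
lemma exists_arc_in {T : Set V} {y : V} (hirr : ∀ v, ¬ A v v) (hyT : y ∉ T)
    (hT : AcyclicSet A T)
    (hcyc : ¬ AcyclicSet A (insert y T)) : ∃ w ∈ T, A w y := by
  by_contra hno
  push_neg at hno
  apply hcyc
  intro v hv
  have claim : ∀ a b : V, TransGen (fun x z => x ∈ insert y T ∧ z ∈ insert y T ∧ A x z) a b →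
      a ≠ y → b ≠ y ∧ TransGen (fun x z => x ∈ T ∧ z ∈ T ∧ A x z) a b := by
    intro a b h
    induction h with
    | @single b hstep =>
      intro ha
      obtain ⟨ham, hbm, hA⟩ := hstep
      have haT : a ∈ T := by
        rcases ham with h' | h'
        · exact absurd h' ha
        · exact h'
      have hby : b ≠ y := by rintro rfl; exact hno a haT hA
      have hbT : b ∈ T := by
        rcases hbm with h' | h'
        · exact absurd h' hby
        · exact h'
      exact ⟨hby, TransGen.single ⟨haT, hbT, hA⟩⟩
    | @tail m b ham hstep ih =>
      intro ha
      obtain ⟨hmy, ihm⟩ := ih ha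
      obtain ⟨hmm, hbm, hA⟩ := hstep
      have hmT : m ∈ T := by
        rcases hmm with h' | h'
        · exact absurd h' hmy
        · exact h'
      have hby : b ≠ y := by rintro rfl; exact hno m hmT hA
      have hbT : b ∈ T := by
        rcases hbm with h' | h'
        · exact absurd h' hby
        · exact h'
      exact ⟨hby, ihm.tail ⟨hmT, hbT, hA⟩⟩
  by_cases hvy : v = y
  · rcases (Relation.TransGen.head'_iff.1 hv) with ⟨c, ⟨-, hcm, hA⟩, hrest⟩
    have hA' : A y c := hvy ▸ hA
    have hcy : c ≠ y := by rintro rfl ; exact hirr c hA'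
    have hcT : c ∈ T := by
      rcases hcm with h' | h'
      · exact absurd h' hcy
      · exact h'
    rcases (Relation.reflTransGen_iff_eq_or_transGen.1 hrest) with h | htg
    · exact hno c hcT (by rw [← hvy] at *; exact h ▸ hA)
    · exact absurd ((claim c v htg hcy).1) (by simp [hvy])
  · exact hT v (claim v v hv hvy).2

end Helpers

section Compress
variable {V : Type*} {A : V → V → Prop}

/-- Remove an unused color `s` from the palette. -/
lemma exists_compress {n : ℕ} (c : V → Fin (n+1)) (s : Fin (n+1)) (hs : ∀ v, c v ≠ s) :
    ∃ c' : V → Fin n, ∀ v, s.succAbove (c' v) = c v := by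
  have h : ∀ v, ∃ j : Fin n, s.succAbove j = c v := fun v =>
    Fin.exists_succAbove_eq (hs v)
  choose c' hc' using h
  exact ⟨c', hc'⟩

/-- Classes of a compressed coloring. -/
lemma compress_classes {n : ℕ} {c : V → Fin (n+1)} {s : Fin (n+1)} {c' : V → Fin n}
    (hc' : ∀ v, s.succAbove (c' v) = c v) (j : Fin n) :
    {v | c' v = j} = {v | c v = s.succAbove j} := by
  ext v
  simp only [Set.mem_setOf_eq]
  constructor
  · rintro rfl; exact (hc' v).symm
  · intro h
    exact Fin.succAbove_right_injective (p := s) (by rw [hc' v, h])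

/-- A compressed acyclic-complete data package. -/
lemma compress_package {n : ℕ} (c : V → Fin (n+1)) (s : Fin (n+1))
    (hs : ∀ v, c v ≠ s)
    (hne : ∀ i, i ≠ s → ∃ v, c v = i)
    (hacyc : ∀ i, AcyclicSet A {v | c v = i})
    (hcomp : ∀ i j, i ≠ j → i ≠ s → j ≠ s → ∃ u v, A u v ∧ c u = i ∧ c v = j) :
    ∃ c' : V → Fin n, IsAcyclicColoring A c' ∧ IsCompleteColoring A c' := by
  obtain ⟨c', hc'⟩ := exists_compress c s hs
  have hsurj : Function.Surjective c' := by
    intro j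
    obtain ⟨v, hv⟩ := hne (s.succAbove j) (Fin.succAbove_ne s j)
    exact ⟨v, Fin.succAbove_right_injective (p := s) (by rw [hc' v, hv])⟩
  refine ⟨c', ⟨hsurj, fun j => ?_⟩, ⟨hsurj, fun i j hij => ?_⟩⟩
  · rw [compress_classes hc']
    exact hacyc _
  · obtain ⟨u, v, hA, hu, hv⟩ := hcomp (s.succAbove i) (s.succAbove j)
      (fun h => hij (Fin.succAbove_right_injective h))
      (Fin.succAbove_ne s i) (Fin.succAbove_ne s j)
    refine ⟨u, v, hA, ?_, ?_⟩
    · exact Fin.succAbove_right_injective (p := s) (by rw [hc' u, hu])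
    · exact Fin.succAbove_right_injective (p := s) (by rw [hc' v, hv])

/-- Acyclic-only version. -/
lemma compress_acyclic {n : ℕ} (c : V → Fin (n+1)) (s : Fin (n+1))
    (hs : ∀ v, c v ≠ s)
    (hacyc : ∀ i, AcyclicSet A {v | c v = i}) :
    ∃ c' : V → Fin n, ∀ j, AcyclicSet A {v | c' v = j} := by
  obtain ⟨c', hc'⟩ := exists_compress c s hs
  exact ⟨c', fun j => by rw [compress_classes hc']; exact hacyc _⟩

/-- Any function with acyclic classes (not nec. surjective) bounds `dc`. -/
lemma dc_le_of_acyclic_fn : ∀ (m : ℕ) (c : V → Fin m),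
    (∀ i, AcyclicSet A {v | c v = i}) → dc A ≤ m := by
  intro m
  induction m with
  | zero =>
    intro c hacyc
    have : IsAcyclicColoring A c := ⟨fun j => j.elim0, hacyc⟩
    exact Nat.sInf_le ⟨c, this⟩
  | succ n ih =>
    intro c hacyc
    by_cases hsurj : Function.Surjective c
    · exact Nat.sInf_le ⟨c, hsurj, hacyc⟩
    · simp only [Function.Surjective, not_forall, not_exists] at hsurj
      obtain ⟨s, hs⟩ := hsurj
      obtain ⟨c', hc'⟩ := compress_acyclic c s (fun v h => hs v h) hacyc
      exact (ih c' hc').trans (Nat.le_succ n)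

end Compress

lemma acyclicSet_empty' {V : Type*} {A : V → V → Prop} : AcyclicSet A (∅ : Set V) := by
  intro v hv
  rcases (Relation.TransGen.head'_iff.1 hv) with ⟨c, ⟨hv', -, -⟩, -⟩
  exact hv'

section Basics
variable {V : Type*} [Fintype V] {A : V → V → Prop}

/-- Merge color `p` into color `q`. -/
lemma merge_colors {k : ℕ} (c : V → Fin k) (p q : Fin k) (hpq : p ≠ q) :
    ∃ c₂ : V → Fin k, (∀ v, c₂ v ≠ p) ∧
      (∀ i, i ≠ p → i ≠ q → {v | c₂ v = i} = {v | c v = i}) ∧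
      {v | c₂ v = q} = {v | c v = p} ∪ {v | c v = q} := by
  classical
  refine ⟨fun v => if c v = p then q else c v, ?_, ?_, ?_⟩
  · intro v h
    simp only at h
    by_cases h' : c v = p
    · rw [if_pos h'] at h; exact hpq h.symm
    · rw [if_neg h'] at h; exact h' h
  · intro i hip hiq
    ext v
    simp only [Set.mem_setOf_eq]
    by_cases h' : c v = p
    · simp only [if_pos h']
      constructor
      · intro h; exact absurd h.symm hiq
      · intro h; exact absurd (h.symm.trans h') hip
    · simp only [if_neg h']
  · ext v
    simp only [Set.mem_setOf_eq, Set.mem_union]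
    by_cases h' : c v = p
    · simp [if_pos h', h']
    · simp [if_neg h', h']

lemma dcSet_nonempty (hirr : ∀ v : V, ¬ A v v) :
    {k | ∃ c : V → Fin k, IsAcyclicColoring A c}.Nonempty := by
  refine ⟨Fintype.card V, ⇑(Fintype.equivFin V), (Fintype.equivFin V).surjective, fun i => ?_⟩
  apply acyclicSet_subsingleton hirr
  intro a ha b hb
  exact (Fintype.equivFin V).injective (ha.trans hb.symm)

lemma mem_dacSet_le_card {k : ℕ} (c : V → Fin k) (hsurj : Function.Surjective c) :
    k ≤ Fintype.card V := by
  simpa using Fintype.card_le_of_surjective c hsurj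

lemma dacSet_bddAbove :
    BddAbove {k | ∃ c : V → Fin k, IsAcyclicColoring A c ∧ IsCompleteColoring A c} := by
  refine ⟨Fintype.card V, fun k hk => ?_⟩
  obtain ⟨c, hc, -⟩ := hk
  exact mem_dacSet_le_card c hc.1

/-- An acyclic coloring with at most `dc` colors is complete. -/
lemma complete_of_min {k : ℕ} (c : V → Fin k) (hc : IsAcyclicColoring A c)
    (hk : k ≤ dc A) : IsCompleteColoring A c := by
  refine ⟨hc.1, fun p q hpq => ?_⟩
  by_contra hno
  push_neg at hno
  obtain ⟨c₂, h1, h2, h3⟩ := merge_colors c p q hpq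
  have hacyc₂ : ∀ i, AcyclicSet A {v | c₂ v = i} := by
    intro i
    by_cases hip : i = p
    · subst hip
      have he : {v | c₂ v = i} = (∅ : Set V) := by
        ext v
        simp only [Set.mem_setOf_eq, Set.mem_empty_iff_false, iff_false]
        exact h1 v
      rw [he]; exact acyclicSet_empty'
    · by_cases hiq : i = q
      · subst hiq
        rw [h3]
        refine acyclicSet_union (hc.2 p) (hc.2 i) ?_
        intro u hu w hw hA
        exact hno u w hA hu hw
      · rw [h2 i hip hiq]; exact hc.2 i
  rcases k with - | n
  · exact p.elim0
  · obtain ⟨c', hc'⟩ := compress_acyclic c₂ p h1 hacyc₂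
    have := dc_le_of_acyclic_fn n c' hc'
    omega

/-- `dc` itself is an achievable complete acyclic order. -/
lemma dc_mem_S (hirr : ∀ v : V, ¬ A v v) :
    ∃ c : V → Fin (dc A), IsAcyclicColoring A c ∧ IsCompleteColoring A c := by
  obtain ⟨c, hc⟩ := Nat.sInf_mem (dcSet_nonempty (A := A) hirr)
  exact ⟨c, hc, complete_of_min c hc le_rfl⟩

lemma dacSet_nonempty (hirr : ∀ v : V, ¬ A v v) :
    {k | ∃ c : V → Fin k, IsAcyclicColoring A c ∧ IsCompleteColoring A c}.Nonempty :=
  ⟨dc A, dc_mem_S hirr⟩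

lemma dc_pos_of_nonempty (hirr : ∀ v : V, ¬ A v v) (hV : Nonempty V) : 1 ≤ dc A := by
  obtain ⟨c, hc⟩ := Nat.sInf_mem (dcSet_nonempty (A := A) hirr)
  by_contra h
  push_neg at h
  have hd : dc A = 0 := by omega
  exact (Fin.cast hd (c hV.some)).elim0

end Basics

section Subtype
variable {V : Type*} {A : V → V → Prop} {P : V → Prop}

lemma acyclic_subtype_of_ambient {S : Set V} (h : AcyclicSet A S) :
    AcyclicSet (fun a b : Subtype P => A a.1 b.1) {x : Subtype P | x.1 ∈ S} := by
  intro x hx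
  exact h x.1 (Relation.TransGen.lift Subtype.val
    (fun a b ⟨ha, hb, hA⟩ => ⟨ha, hb, hA⟩) x x hx)

lemma acyclic_ambient_of_subtype {S' : Set (Subtype P)}
    (h : AcyclicSet (fun a b : Subtype P => A a.1 b.1) S') :
    AcyclicSet A (Subtype.val '' S') := by
  intro v hv
  have claim : ∀ a b : V,
      Relation.TransGen (fun x y => x ∈ Subtype.val '' S' ∧ y ∈ Subtype.val '' S' ∧ A x y) a b →
      ∀ (xa : Subtype P) (xb : Subtype P), xa.1 = a → xb.1 = b → xa ∈ S' → xb ∈ S' →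
      Relation.TransGen (fun x y : Subtype P => x ∈ S' ∧ y ∈ S' ∧ A x.1 y.1) xa xb := by
    intro a b hab
    induction hab with
    | @single b hstep =>
      intro xa xb hxa hxb hxaS hxbS
      exact Relation.TransGen.single ⟨hxaS, hxbS, by rw [hxa, hxb]; exact hstep.2.2⟩
    | @tail m b hm hstep ih =>
      intro xa xb hxa hxb hxaS hxbS
      obtain ⟨hmm, -, hA⟩ := hstep
      obtain ⟨xm, hxmS, hxm⟩ := hmm
      exact (ih xa xm hxa hxm hxaS hxmS).tail ⟨hxmS, hxbS, by rw [hxm, hxb]; exact hA⟩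
  rcases (Relation.TransGen.head'_iff.1 hv) with ⟨-, ⟨hvm, -, -⟩, -⟩
  obtain ⟨xv, hxvS, hxv⟩ := hvm
  exact h xv (claim v v hv xv xv hxv hxv hxvS hxvS)

end Subtype

section Step
universe u
variable {V : Type u} [Fintype V] {A : V → V → Prop}

open Finset

private def Phi {k : ℕ} (c : V → Fin k) : ℕ :=
  ∑ i : Fin k, (Finset.univ.filter (fun v => c v = i)).card ^ 2

private lemma sum_card_classes {k : ℕ} (c : V → Fin k) :
    ∑ i : Fin k, (Finset.univ.filter (fun v => c v = i)).card = Fintype.card V := by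
  rw [← Finset.card_univ]
  exact (Finset.card_eq_sum_card_fiberwise (fun x _ => Finset.mem_univ (c x))).symm

private lemma Phi_le {k : ℕ} (c : V → Fin k) : Phi c ≤ (Fintype.card V)^2 := by
  have h := sum_card_classes c
  calc Phi c ≤ ∑ i : Fin k, (Finset.univ.filter (fun v => c v = i)).card * Fintype.card V := by
        refine Finset.sum_le_sum fun i _ => ?_
        rw [pow_two]
        exact Nat.mul_le_mul_left _ (h ▸ Finset.single_le_sum
          (f := fun i => (Finset.univ.filter (fun v => c v = i)).card)
          (fun _ _ => Nat.zero_le _) (Finset.mem_univ i))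
    _ = (Fintype.card V)^2 := by rw [← Finset.sum_mul, h, pow_two]

lemma step_lemma (hirr : ∀ v : V, ¬ A v v)
    (IH : ∀ (W : Type u) [Fintype W] (B : W → W → Prop), (∀ w, ¬ B w w) → ∀ l' : ℕ,
      Fintype.card W < Fintype.card V → dc B ≤ l' → l' ≤ dac B →
      ∃ ρ : W → Fin l', IsAcyclicColoring B ρ ∧ IsCompleteColoring B ρ)
    (n : ℕ) (hdc : dc A + 2 ≤ n + 1)
    (c : V → Fin (n+1)) (hca : IsAcyclicColoring A c) (hcc : IsCompleteColoring A c) :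
    ∃ c' : V → Fin n, IsAcyclicColoring A c' ∧ IsCompleteColoring A c' := by
  classical
  suffices aux : ∀ t : ℕ, ∀ c : V → Fin (n+1), IsAcyclicColoring A c →
      IsCompleteColoring A c → (Fintype.card V)^2 + 1 ≤ Phi c + t →
      ∃ c' : V → Fin n, IsAcyclicColoring A c' ∧ IsCompleteColoring A c' by
    exact aux ((Fintype.card V)^2 + 1) c hca hcc (by omega)
  intro t
  induction t with
  | zero =>
    intro c hca hcc hbudget
    have := Phi_le c
    omega
  | succ t iht =>
    intro c hca hcc hbudget
    obtain ⟨i_max, -, hmax⟩ := Finset.exists_max_image Finset.univ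
      (fun i => (Finset.univ.filter (fun v => c v = i)).card) ⟨0, Finset.mem_univ 0⟩
    by_cases hcaseA : ∃ y, c y ≠ i_max ∧ AcyclicSet A (insert y {v | c v = i_max})
    · -- CASE A : we can move some vertex into the largest class
      obtain ⟨y, hyne, hyac⟩ := hcaseA
      set s : Fin (n+1) := c y with hs_def
      have hsne : s ≠ i_max := hyne
      set c' : V → Fin (n+1) := Function.update c y i_max with hc'def
      have hc'y : c' y = i_max := Function.update_self y i_max c
      have hc'v : ∀ v, v ≠ y → c' v = c v := fun v hv => Function.update_of_ne hv i_max c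
      have hCimax : {v | c' v = i_max} = insert y {v | c v = i_max} := by
        ext v
        by_cases hv : v = y
        · subst hv; simp [hc'y]
        · simp only [Set.mem_setOf_eq, Set.mem_insert_iff, hc'v v hv]
          exact ⟨fun h => Or.inr h, fun h => h.elim (fun h' => absurd h' hv) id⟩
      have hCs : {v | c' v = s} = {v | c v = s} \ {y} := by
        ext v
        by_cases hv : v = y
        · subst hv; simp [hc'y, hsne.symm]
        · simp [Set.mem_setOf_eq, hc'v v hv, hv]
      have hCoth : ∀ i, i ≠ i_max → i ≠ s → {v | c' v = i} = {v | c v = i} := by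
        intro i h1 h2
        ext v
        by_cases hv : v = y
        · subst hv; simp [hc'y, Ne.symm h1, Ne.symm h2, hs_def]; exact fun h => h2 (hs_def.trans h).symm
        · simp [Set.mem_setOf_eq, hc'v v hv]
      have hacyc' : ∀ i, AcyclicSet A {v | c' v = i} := by
        intro i
        by_cases h1 : i = i_max
        · subst h1; rw [hCimax]; exact hyac
        · by_cases h2 : i = s
          · subst h2; rw [hCs]
            exact acyclicSet_mono Set.diff_subset (hca.2 s)
          · rw [hCoth i h1 h2]; exact hca.2 i
      have hreal' : ∀ i j : Fin (n+1), i ≠ j → i ≠ s → j ≠ s →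
          ∃ u v, A u v ∧ c' u = i ∧ c' v = j := by
        intro i j hij his hjs
        obtain ⟨u, v, hA, hu, hv⟩ := hcc.2 i j hij
        have hu' : u ≠ y := fun h => his (by rw [← hu, h])
        have hv' : v ≠ y := fun h => hjs (by rw [← hv, h])
        exact ⟨u, v, hA, (hc'v u hu').trans hu, (hc'v v hv').trans hv⟩
      by_cases hsing : ∀ z, c z = s → z = y
      · -- sub-case (a) : the source class was a singleton; color s is now unused
        refine compress_package c' s ?_ ?_ hacyc' (fun i j hij his hjs => hreal' i j hij his hjs)
        · intro v h
          by_cases hv : v = y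
          · subst hv; exact hsne (hc'y.symm.trans h).symm
          · exact hv (hsing v ((hc'v v hv).symm.trans h))
        · intro i hi
          by_cases h1 : i = i_max
          · exact ⟨y, h1 ▸ hc'y⟩
          · obtain ⟨v, hv⟩ := hca.1 i
            have hv' : v ≠ y := fun h => hi (by rw [← hv, h])
            exact ⟨v, (hc'v v hv').trans hv⟩
      · push_neg at hsing
        obtain ⟨z, hz, hzy⟩ := hsing
        have hsurj' : Function.Surjective c' := by
          intro i
          by_cases h1 : i = i_max
          · exact ⟨y, h1 ▸ hc'y⟩
          · by_cases h2 : i = s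
            · exact ⟨z, (hc'v z hzy).trans (h2 ▸ hz)⟩
            · obtain ⟨v, hv⟩ := hca.1 i
              have hv' : v ≠ y := fun h => h2 (by rw [← hv, h])
              exact ⟨v, (hc'v v hv').trans hv⟩
        by_cases hC : ∀ p q : Fin (n+1), p ≠ q → ∃ u v, A u v ∧ c' u = p ∧ c' v = q
        · -- sub-case (b) : the new coloring is still complete; recurse with larger Phi
          refine iht c' ⟨hsurj', hacyc'⟩ ⟨hsurj', hC⟩ ?_
          -- arithmetic : Phi c' ≥ Phi c + 1
          have hFimax : Finset.univ.filter (fun v => c' v = i_max)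
              = insert y (Finset.univ.filter (fun v => c v = i_max)) := by
            ext v
            simp only [Finset.mem_filter, Finset.mem_univ, true_and, Finset.mem_insert]
            by_cases hv : v = y
            · subst hv; simp [hc'y]
            · simp [hc'v v hv, hv]
          have hFs : Finset.univ.filter (fun v => c' v = s)
              = (Finset.univ.filter (fun v => c v = s)).erase y := by
            ext v
            simp only [Finset.mem_filter, Finset.mem_univ, true_and, Finset.mem_erase]
            by_cases hv : v = y
            · subst hv; simp [hc'y, Ne.symm hsne]
            · simp [hc'v v hv, hv]
          have hFoth : ∀ i, i ≠ i_max → i ≠ s →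
              Finset.univ.filter (fun v => c' v = i) = Finset.univ.filter (fun v => c v = i) := by
            intro i h1 h2
            ext v
            simp only [Finset.mem_filter, Finset.mem_univ, true_and]
            by_cases hv : v = y
            · subst hv; simp [hc'y, Ne.symm h1, Ne.symm h2, hs_def]; exact fun h => h2 (hs_def.trans h).symm
            · simp [hc'v v hv]
          set a := (Finset.univ.filter (fun v => c v = i_max)).card with ha_def
          set b := (Finset.univ.filter (fun v => c v = s)).card with hb_def
          have hyni : y ∉ Finset.univ.filter (fun v => c v = i_max) := by
            simp [hs_def ▸ hsne]
          have hys : y ∈ Finset.univ.filter (fun v => c v = s) := by simp [hs_def]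
          have hzs : z ∈ Finset.univ.filter (fun v => c v = s) := by simp [hz]
          have hcard_imax : (Finset.univ.filter (fun v => c' v = i_max)).card = a + 1 := by
            rw [hFimax, Finset.card_insert_of_notMem hyni]
          have hcard_s : (Finset.univ.filter (fun v => c' v = s)).card = b - 1 := by
            rw [hFs, Finset.card_erase_of_mem hys]
          have hb2 : 2 ≤ b := by
            have : ({z, y} : Finset V) ⊆ Finset.univ.filter (fun v => c v = s) := by
              intro w hw
              rcases Finset.mem_insert.1 hw with rfl | hw
              · exact hzs
              · rw [Finset.mem_singleton.1 hw]; exact hys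
            have h2 := Finset.card_le_card this
            rwa [Finset.card_insert_of_notMem (by simp [hzy]), Finset.card_singleton] at h2
          have hab : b ≤ a := hmax s (Finset.mem_univ s)
          have hsmem : s ∈ Finset.univ.erase i_max := by
            simp [Finset.mem_erase, hsne]
          have hdecomp : ∀ g : V → Fin (n+1),
              Phi g = (Finset.univ.filter (fun v => g v = i_max)).card ^ 2
                + (Finset.univ.filter (fun v => g v = s)).card ^ 2
                + ∑ i ∈ (Finset.univ.erase i_max).erase s,
                    (Finset.univ.filter (fun v => g v = i)).card ^ 2 := by
            intro g
            rw [Phi, ← Finset.add_sum_erase _ _ (Finset.mem_univ i_max),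
              ← Finset.add_sum_erase _ _ hsmem]
            ring
          have hrest : ∑ i ∈ (Finset.univ.erase i_max).erase s,
                (Finset.univ.filter (fun v => c' v = i)).card ^ 2
              = ∑ i ∈ (Finset.univ.erase i_max).erase s,
                (Finset.univ.filter (fun v => c v = i)).card ^ 2 := by
            refine Finset.sum_congr rfl fun i hi => ?_
            rw [hFoth i (Finset.mem_erase.1 (Finset.mem_erase.1 hi).2).1 (Finset.mem_erase.1 hi).1]
          have hPhi : Phi c + 1 ≤ Phi c' := by
            rw [hdecomp c, hdecomp c', hrest, hcard_imax, hcard_s, ← ha_def, ← hb_def]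
            obtain ⟨bb, hbb⟩ : ∃ bb, b = bb + 1 := ⟨b - 1, by omega⟩
            rw [hbb] at hab ⊢
            simp only [Nat.add_sub_cancel]
            nlinarith
          omega
        · -- sub-case (c) : completeness broke; the broken pair involves s — merge
          push_neg at hC
          obtain ⟨p, q, hpq, hno⟩ := hC
          have hps : p = s ∨ q = s := by
            by_contra hcon
            push_neg at hcon
            obtain ⟨u, v, hA, hu, hv⟩ := hreal' p q hpq hcon.1 hcon.2
            exact hno u v hA hu hv
          rcases hps with rfl | rfl
          · -- p = s : no arc from class' s to class' q
            obtain ⟨c₂, h1, h2, h3⟩ := merge_colors c' s q hpq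
            have hacyc₂ : ∀ i, AcyclicSet A {v | c₂ v = i} := by
              intro i
              by_cases hip : i = s
              · rw [hip]
                have he : {v | c₂ v = s} = (∅ : Set V) := by
                  ext v; simp only [Set.mem_setOf_eq, Set.mem_empty_iff_false, iff_false]
                  exact h1 v
                rw [he]; exact acyclicSet_empty'
              · by_cases hiq : i = q
                · rw [hiq, h3]
                  exact acyclicSet_union (hacyc' s) (hacyc' q)
                    (fun u hu v hv hA => hno u v hA hu hv)
                · rw [h2 i hip hiq]; exact hacyc' i
            have hmem₂ : ∀ w (i : Fin (n+1)), i ≠ s → c' w = i → c₂ w = i := by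
              intro w i hip hw
              by_cases hiq : i = q
              · rw [hiq]
                have : w ∈ {v | c₂ v = q} := by rw [h3]; exact Or.inr (hiq ▸ hw)
                exact this
              · have : w ∈ {v | c₂ v = i} := by rw [h2 i hip hiq]; exact hw
                exact this
            refine compress_package c₂ s h1 ?_ hacyc₂ ?_
            · intro i hi
              obtain ⟨w, hw⟩ := hsurj' i
              exact ⟨w, hmem₂ w i hi hw⟩
            · intro i j hij hip hjp
              obtain ⟨u, v, hA, hu, hv⟩ := hreal' i j hij hip hjp
              exact ⟨u, v, hA, hmem₂ u i hip hu, hmem₂ v j hjp hv⟩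
          · -- q = s : no arc from class' p to class' s
            obtain ⟨c₂, h1, h2, h3⟩ := merge_colors c' s p (Ne.symm hpq)
            have hacyc₂ : ∀ i, AcyclicSet A {v | c₂ v = i} := by
              intro i
              by_cases hiq : i = s
              · rw [hiq]
                have he : {v | c₂ v = s} = (∅ : Set V) := by
                  ext v; simp only [Set.mem_setOf_eq, Set.mem_empty_iff_false, iff_false]
                  exact h1 v
                rw [he]; exact acyclicSet_empty'
              · by_cases hip : i = p
                · rw [hip, h3, Set.union_comm]
                  exact acyclicSet_union (hacyc' p) (hacyc' s)
                    (fun u hu v hv hA => hno u v hA hu hv)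
                · rw [h2 i hiq hip]; exact hacyc' i
            have hmem₂ : ∀ w (i : Fin (n+1)), i ≠ s → c' w = i → c₂ w = i := by
              intro w i hiq hw
              by_cases hip : i = p
              · rw [hip]
                have : w ∈ {v | c₂ v = p} := by rw [h3]; exact Or.inr (hip ▸ hw)
                exact this
              · have : w ∈ {v | c₂ v = i} := by rw [h2 i hiq hip]; exact hw
                exact this
            refine compress_package c₂ s h1 ?_ hacyc₂ ?_
            · intro i hi
              obtain ⟨w, hw⟩ := hsurj' i
              exact ⟨w, hmem₂ w i hi hw⟩
            · intro i j hij hip hjp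
              obtain ⟨u, v, hA, hu, hv⟩ := hreal' i j hij hip hjp
              exact ⟨u, v, hA, hmem₂ u i hip hu, hmem₂ v j hjp hv⟩
    · -- CASE B : the largest class rejects every outside vertex
      push_neg at hcaseA
      obtain ⟨v₀, hv₀⟩ := hca.1 i_max
      have hVne : Nonempty V := ⟨v₀⟩
      have hdc1 : 1 ≤ dc A := dc_pos_of_nonempty hirr hVne
      obtain ⟨m, rfl⟩ : ∃ m, n = m + 1 := ⟨n - 1, by omega⟩
      letI : DecidablePred (fun v : V => c v ≠ i_max) := Classical.decPred _
      have hirr' : ∀ w : {v : V // c v ≠ i_max},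
          ¬ (fun a b : {v : V // c v ≠ i_max} => A a.1 b.1) w w := fun w => hirr w.1
      have hcard : Fintype.card {v : V // c v ≠ i_max} < Fintype.card V :=
        Fintype.card_subtype_lt (x := v₀) (by simp [hv₀])
      -- a complete acyclic (m+1)-coloring of the subtype
      obtain ⟨ρ₁, hρ₁⟩ := exists_compress (n := m + 1)
        (fun x : {v : V // c v ≠ i_max} => c x.1) i_max (fun x => x.2)
      have hρ₁a : IsAcyclicColoring (fun a b : {v : V // c v ≠ i_max} => A a.1 b.1) ρ₁ := by
        constructor
        · intro j
          obtain ⟨v, hv⟩ := hca.1 (i_max.succAbove j)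
          have hv' : c v ≠ i_max := by rw [hv]; exact Fin.succAbove_ne i_max j
          refine ⟨⟨v, hv'⟩, ?_⟩
          have := compress_classes hρ₁ j
          exact Fin.succAbove_right_injective (p := i_max) (by rw [hρ₁ ⟨v, hv'⟩]; exact hv)
        · intro j
          rw [compress_classes hρ₁ j]
          exact acyclic_subtype_of_ambient (hca.2 (i_max.succAbove j))
      have hρ₁c : IsCompleteColoring (fun a b : {v : V // c v ≠ i_max} => A a.1 b.1) ρ₁ := by
        refine ⟨hρ₁a.1, fun i j hij => ?_⟩
        obtain ⟨u, v, hA, hu, hv⟩ := hcc.2 (i_max.succAbove i) (i_max.succAbove j)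
          (fun h => hij (Fin.succAbove_right_injective h))
        have hu' : c u ≠ i_max := by rw [hu]; exact Fin.succAbove_ne i_max i
        have hv' : c v ≠ i_max := by rw [hv]; exact Fin.succAbove_ne i_max j
        refine ⟨⟨u, hu'⟩, ⟨v, hv'⟩, hA, ?_, ?_⟩
        · exact Fin.succAbove_right_injective (p := i_max) (by rw [hρ₁ ⟨u, hu'⟩]; exact hu)
        · exact Fin.succAbove_right_injective (p := i_max) (by rw [hρ₁ ⟨v, hv'⟩]; exact hv)
      have hdacV' : (m+1 : ℕ) ≤ dac (fun a b : {v : V // c v ≠ i_max} => A a.1 b.1) :=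
        le_csSup dacSet_bddAbove ⟨ρ₁, hρ₁a, hρ₁c⟩
      -- dc of the subtype is at most m
      obtain ⟨c₀, hc₀⟩ := Nat.sInf_mem (dcSet_nonempty (A := A) hirr)
      have hdcV' : dc (fun a b : {v : V // c v ≠ i_max} => A a.1 b.1) ≤ m := by
        have h1 := dc_le_of_acyclic_fn (A := fun a b : {v : V // c v ≠ i_max} => A a.1 b.1)
          (dc A) (fun x => c₀ x.1) (fun i => acyclic_subtype_of_ambient (hc₀.2 i))
        omega
      obtain ⟨ρ, hρa, hρc⟩ := IH {v : V // c v ≠ i_max}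
        (fun a b => A a.1 b.1) hirr' m hcard hdcV' (le_trans (by omega) hdacV')
      -- assemble the final coloring
      set τ : V → Fin (m+1) := fun v =>
        if h : c v = i_max then Fin.last m else (ρ ⟨v, h⟩).castSucc with hτdef
      have hτ_in : ∀ v (h : c v = i_max), τ v = Fin.last m := by
        intro v h; simp only [hτdef, dif_pos h]
      have hτ_out : ∀ v (h : c v ≠ i_max), τ v = (ρ ⟨v, h⟩).castSucc := by
        intro v h; simp only [hτdef, dif_neg h]
      have hTlast : {v | τ v = Fin.last m} = {v | c v = i_max} := by
        ext v
        simp only [Set.mem_setOf_eq]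
        by_cases h : c v = i_max
        · simp [hτ_in v h, h]
        · rw [hτ_out v h]
          simp only [h, iff_false]
          exact (Fin.castSucc_lt_last _).ne
      have hTcs : ∀ j : Fin m, {v | τ v = j.castSucc}
          = Subtype.val '' {x : {v : V // c v ≠ i_max} | ρ x = j} := by
        intro j
        ext v
        simp only [Set.mem_setOf_eq, Set.mem_image]
        by_cases h : c v = i_max
        · rw [hτ_in v h]
          constructor
          · intro h'; exact absurd h'.symm (Fin.castSucc_lt_last _).ne
          · rintro ⟨x, -, rfl⟩; exact absurd h x.2
        · rw [hτ_out v h]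
          constructor
          · intro h'
            exact ⟨⟨v, h⟩, Fin.castSucc_inj.1 h', rfl⟩
          · rintro ⟨x, hx, rfl⟩
            have : (⟨x.1, h⟩ : {v : V // c v ≠ i_max}) = x := Subtype.ext rfl
            rw [this, hx]
      have hτa : IsAcyclicColoring A τ := by
        constructor
        · intro i
          rcases Fin.eq_castSucc_or_eq_last i with ⟨j, rfl⟩ | rfl
          · obtain ⟨x, hx⟩ := hρa.1 j
            exact ⟨x.1, by rw [hτ_out x.1 x.2]; simp [Subtype.coe_eta, hx]⟩
          · exact ⟨v₀, hτ_in v₀ hv₀⟩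
        · intro i
          rcases Fin.eq_castSucc_or_eq_last i with ⟨j, rfl⟩ | rfl
          · rw [hTcs j]
            exact acyclic_ambient_of_subtype (hρa.2 j)
          · rw [hTlast]
            exact hca.2 i_max
      refine ⟨τ, hτa, hτa.1, fun i j hij => ?_⟩
      rcases Fin.eq_castSucc_or_eq_last i with ⟨i', rfl⟩ | rfl
      · rcases Fin.eq_castSucc_or_eq_last j with ⟨j', rfl⟩ | rfl
        · -- both not the big class : use completeness of ρ
          obtain ⟨u, v, hA, hu, hv⟩ := hρc.2 i' j' (fun h => hij (by rw [h]))
          refine ⟨u.1, v.1, hA, ?_, ?_⟩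
          · rw [hτ_out u.1 u.2]; simp [Subtype.coe_eta, hu]
          · rw [hτ_out v.1 v.2]; simp [Subtype.coe_eta, hv]
        · -- from a small class into the big class
          obtain ⟨x, hx⟩ := hρa.1 i'
          have hrej := hcaseA x.1 x.2
          obtain ⟨u, hu, hAu⟩ := exists_arc_out hirr x.2 (hca.2 i_max) hrej
          refine ⟨x.1, u, hAu, ?_, hτ_in u hu⟩
          rw [hτ_out x.1 x.2]; simp [Subtype.coe_eta, hx]
      · rcases Fin.eq_castSucc_or_eq_last j with ⟨j', rfl⟩ | rfl
        · -- from the big class into a small class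
          obtain ⟨x, hx⟩ := hρa.1 j'
          have hrej := hcaseA x.1 x.2
          obtain ⟨w, hw, hAw⟩ := exists_arc_in hirr x.2 (hca.2 i_max) hrej
          refine ⟨w, x.1, hAw, hτ_in w hw, ?_⟩
          rw [hτ_out x.1 x.2]; simp [Subtype.coe_eta, hx]
        · exact absurd rfl hij

end Step

section Main
universe u

lemma main_thm (N : ℕ) : ∀ (V : Type u) [Fintype V] (A : V → V → Prop),
    (∀ v, ¬ A v v) → ∀ l : ℕ, Fintype.card V ≤ N → dc A ≤ l → l ≤ dac A →
    ∃ c : V → Fin l, IsAcyclicColoring A c ∧ IsCompleteColoring A c := by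
  induction N using Nat.strong_induction_on with
  | _ N ih =>
  intro V _ A hirr l hcard hdcl hldac
  by_cases hl : l = dc A
  · rw [hl]
    exact dc_mem_S hirr
  · have hlt : dc A < l := lt_of_le_of_ne hdcl (Ne.symm hl)
    have IHfun : ∀ (W : Type u) [Fintype W] (B : W → W → Prop), (∀ w, ¬ B w w) → ∀ l' : ℕ,
        Fintype.card W < Fintype.card V → dc B ≤ l' → l' ≤ dac B →
        ∃ ρ : W → Fin l', IsAcyclicColoring B ρ ∧ IsCompleteColoring B ρ := by
      intro W _ B hirrB l' hcW h1 h2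
      exact ih (Fintype.card W) (by omega) W B hirrB l' le_rfl h1 h2
    have descent : ∀ d k : ℕ, l ≤ k → k ≤ l + d →
        (∃ c : V → Fin k, IsAcyclicColoring A c ∧ IsCompleteColoring A c) →
        ∃ c : V → Fin l, IsAcyclicColoring A c ∧ IsCompleteColoring A c := by
      intro d
      induction d with
      | zero =>
        intro k hk1 hk2 h
        obtain rfl : k = l := by omega
        exact h
      | succ d ihd =>
        intro k hk1 hk2 hex
        by_cases hkl : k = l
        · subst hkl; exact hex
        · obtain ⟨n, rfl⟩ : ∃ n, k = n + 1 := ⟨k - 1, by omega⟩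
          obtain ⟨ck, hka, hkc⟩ := hex
          exact ihd n (by omega) (by omega) (step_lemma hirr IHfun n (by omega) ck hka hkc)
    have hdacmem := Nat.sSup_mem (dacSet_nonempty (A := A) hirr) dacSet_bddAbove
    exact descent (dac A - l) (dac A) hldac (by omega) hdacmem

end Main


/-- For a digraph `D` and an integer `l`, there exists a complete acyclic
`l`-coloring of `D` if and only if `dc(D) ≤ l ≤ dac(D)`. -/
theorem stmt16 {V : Type*} [Fintype V] (A : V → V → Prop)
    (hirr : ∀ v : V, ¬ A v v) (l : ℕ) :
    (∃ c : V → Fin l, IsAcyclicColoring A c ∧ IsCompleteColoring A c) ↔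
      (dc A ≤ l ∧ l ≤ dac A) := by
  constructor
  · rintro ⟨c, hca, hcc⟩
    exact ⟨Nat.sInf_le ⟨c, hca⟩, le_csSup dacSet_bddAbove ⟨c, hca, hcc⟩⟩
  · rintro ⟨h1, h2⟩
    exact main_thm (Fintype.card V) V A hirr l le_rfl h1 h2
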